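/- For every nonnegative integer n, Σ_{k∈ℤ, k even} p₂(n − k²) − Σ_{k∈ℤ, k odd} p₂(n − k²) = p(n/2), where p₂(m) = 0 for m < 0 and p(n/2) is interpreted as 0 when n is odd. (Both sums are finite since only the k with k² ≤ n contribute.) -/

import Mathlib

/-- The partition number `p(n)`: the number of partitions of `n`. -/
noncomputable def partitionNumber (n : ℕ) : ℕ := Nat.card (Nat.Partition n)

/-- The bipartition number `p₂(n)`: the number of ordered pairs `(λ, μ)` of partitions
with `|λ| + |μ| = n`. -/
noncomputable def bipartitionNumber (n : ℕ) : ℕ :=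
  Nat.card {x : (Σ a : ℕ, Nat.Partition a) × (Σ b : ℕ, Nat.Partition b) // x.1.1 + x.2.1 = n}

/-- `p₂` extended to the integers, with value `0` at negative integers. -/
noncomputable def bipartitionNumberZ (m : ℤ) : ℤ :=
  if 0 ≤ m then (bipartitionNumber m.toNat : ℤ) else 0


open PowerSeries Finset

noncomputable section
def qb : ℕ → ℤ → PowerSeries ℤ
  | 0, k => if k = 0 then 1 else 0
  | (M+1), k => qb M (k-1) + X ^ (2*k).toNat * qb M k

lemma qb_neg (M : ℕ) : ∀ k : ℤ, k < 0 → qb M k = 0 := by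
  induction M with
  | zero => intro k hk; simp [qb, hk.ne]
  | succ M ih => intro k hk; simp [qb, ih k hk, ih (k-1) (by omega)]

lemma qb_gt (M : ℕ) : ∀ k : ℤ, (M : ℤ) < k → qb M k = 0 := by
  induction M with
  | zero => intro k hk; simp [qb]; omega
  | succ M ih => intro k hk; push_cast at hk; simp [qb, ih k (by omega), ih (k-1) (by omega)]

lemma qb_zero (M : ℕ) : qb M 0 = 1 := by
  induction M with
  | zero => simp [qb]
  | succ M ih => simp [qb, ih, qb_neg M (-1) (by omega)]

lemma qb_pascal2 (M : ℕ) : ∀ k : ℤ,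
    qb (M+1) k = qb M k + X ^ (2*((M:ℤ)+1-k)).toNat * qb M (k-1) := by
  induction M with
  | zero =>
    intro k
    rcases eq_or_ne k 0 with rfl | h0
    · simp [qb]
    rcases eq_or_ne k 1 with rfl | h1
    · norm_num [qb]
    · show qb 0 (k-1) + X ^ (2*k).toNat * qb 0 k = _
      simp [qb, h0, h1, sub_eq_zero]
  | succ M ih =>
    intro k
    show qb (M+1) (k-1) + X ^ (2*k).toNat * qb (M+1) k = _
    conv_lhs => rw [ih (k-1), ih k]
    show _ = qb (M+1) k + X ^ (2*((M:ℤ)+1+1-k)).toNat * qb (M+1) (k-1)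
    show _ = (qb M (k-1) + X ^ (2*k).toNat * qb M k)
      + X ^ (2*((M:ℤ)+1+1-k)).toNat * (qb M (k-1-1) + X ^ (2*(k-1)).toNat * qb M (k-1))
    have hsub : (2*((M:ℤ)+1-(k-1))).toNat = (2*((M:ℤ)+1+1-k)).toNat := by omega
    rw [hsub]
    by_cases hk : 1 ≤ k ∧ k ≤ (M:ℤ) + 1
    · have hexp : (X : PowerSeries ℤ) ^ (2*k).toNat * X ^ (2*((M:ℤ)+1-k)).toNat
          = X ^ (2*((M:ℤ)+1+1-k)).toNat * X ^ (2*(k-1)).toNat := by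
        rw [← pow_add, ← pow_add]; congr 1; omega
      linear_combination (qb M (k-1)) * hexp
    · have h0 : qb M (k-1) = 0 := by
        rcases (by omega : k ≤ 0 ∨ (M:ℤ)+1 < k) with h | h
        · exact qb_neg M _ (by omega)
        · exact qb_gt M _ (by omega)
      rw [h0]; ring

/-- `F₂ s = ∏_{i=1}^s (1 - X^{2i})`. -/
def f2 (s : ℕ) : PowerSeries ℤ := ∏ i ∈ range s, (1 - X ^ (2*(i+1)))

lemma f2_succ (s : ℕ) : f2 (s+1) = f2 s * (1 - X ^ (2*(s+1))) := prod_range_succ _ _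

lemma f2_zero : f2 0 = 1 := by simp [f2]

lemma qb_mul_f2 (M : ℕ) : ∀ k : ℤ, 0 ≤ k → k ≤ M →
    qb M k * f2 k.toNat * f2 ((M:ℤ)-k).toNat = f2 M := by
  induction M with
  | zero =>
    intro k h0 h1
    obtain rfl : k = 0 := by omega
    simp [qb, f2]
  | succ M ih =>
    intro k h0 h1
    rcases eq_or_ne k 0 with rfl | hk0
    · simp [qb_zero, f2_zero]
    have hk1 : 1 ≤ k := by omega
    show (qb M (k-1) + X ^ (2*k).toNat * qb M k) * f2 k.toNat * f2 (((M:ℤ)+1)-k).toNat = _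
    have hf2k : f2 k.toNat = f2 (k-1).toNat * (1 - X ^ (2*k).toNat) := by
      have h : k.toNat = (k-1).toNat + 1 := by omega
      have h2 : 2*((k-1).toNat+1) = (2*k).toNat := by omega
      rw [h, f2_succ, h2]
    rcases eq_or_ne k ((M:ℤ)+1) with rfl | hkM
    · have hz : qb M ((M:ℤ)+1) = 0 := qb_gt M _ (by omega)
      have hk' : ((M:ℤ)+1-1 : ℤ) = (M:ℤ) := by ring
      have h2 : (((M:ℤ)+1) - ((M:ℤ)+1)).toNat = 0 := by omega
      have hMM : ((M:ℤ) - (M:ℤ)).toNat = 0 := by omega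
      have ht : ((M:ℤ)+1).toNat = M+1 := by omega
      have e1 := ih (M:ℤ) (by omega) le_rfl
      rw [Int.toNat_natCast, hMM, f2_zero, mul_one] at e1
      rw [hz, hk', ht, h2, f2_zero, mul_zero, add_zero, mul_one, f2_succ]
      calc qb M (M:ℤ) * (f2 M * (1 - X ^ (2*(M+1))))
          = (qb M (M:ℤ) * f2 M) * (1 - X ^ (2*(M+1))) := by ring
        _ = f2 M * (1 - X ^ (2*(M+1))) := by rw [e1]
    · -- 1 ≤ k ≤ M
      have hkM' : k ≤ (M:ℤ) := by omega
      have hf2Mk : f2 (((M:ℤ)+1)-k).toNat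
          = f2 ((M:ℤ)-k).toNat * (1 - X ^ (2*((M:ℤ)+1-k)).toNat) := by
        have h : (((M:ℤ)+1)-k).toNat = ((M:ℤ)-k).toNat + 1 := by omega
        have h2 : 2*(((M:ℤ)-k).toNat+1) = (2*((M:ℤ)+1-k)).toNat := by omega
        rw [h, f2_succ, h2]
      have e1 := ih (k-1) (by omega) (by omega)
      have e2 := ih k h0 hkM'
      have hsub : ((M:ℤ) - (k-1)).toNat = (((M:ℤ)+1)-k).toNat := by omega
      rw [hsub] at e1
      have hx : (X : PowerSeries ℤ) ^ (2*k).toNat * X ^ (2*((M:ℤ)+1-k)).toNat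
          = X ^ (2*(M+1)) := by
        rw [← pow_add]; congr 1; omega
      rw [f2_succ]
      calc (qb M (k-1) + X ^ (2*k).toNat * qb M k) * f2 k.toNat * f2 (((M:ℤ)+1)-k).toNat
          = (qb M (k-1) * f2 (k-1).toNat * f2 (((M:ℤ)+1)-k).toNat) * (1 - X ^ (2*k).toNat)
            + X ^ (2*k).toNat * ((qb M k * f2 k.toNat * f2 ((M:ℤ)-k).toNat)
                * (1 - X ^ (2*((M:ℤ)+1-k)).toNat)) := by
            rw [hf2k, hf2Mk]; ring
        _ = f2 M * (1 - X ^ (2*k).toNat)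
            + X ^ (2*k).toNat * (f2 M * (1 - X ^ (2*((M:ℤ)+1-k)).toNat)) := by rw [e1, e2]
        _ = f2 M * (1 - X ^ (2*(M+1))) := by
            rw [← hx]; ring

/-- `H m = ∏_{i=1}^m (1 - X^{2i-1})`. -/
def Hodd (m : ℕ) : PowerSeries ℤ := ∏ i ∈ range m, (1 - X ^ (2*i+1))

/-- Finite theta sum with Gaussian binomial weights. -/
def TT (m : ℕ) : PowerSeries ℤ :=
  ∑ k ∈ Icc (-(m:ℤ)) (m:ℤ),
    (C ((Int.negOnePow k : ℤˣ) : ℤ)) * (X ^ ((k^2).toNat) * qb (2*m) ((m:ℤ)+k))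

lemma negOnePow_succ' (k : ℤ) : (((k+1).negOnePow : ℤˣ) : ℤ) = -((k.negOnePow : ℤˣ) : ℤ) := by
  rw [Int.negOnePow_succ]; simp

lemma negOnePow_pred' (k : ℤ) : (((k-1).negOnePow : ℤˣ) : ℤ) = -((k.negOnePow : ℤˣ) : ℤ) := by
  have := Int.negOnePow_succ (k-1)
  rw [sub_add_cancel] at this
  rw [this]; simp

lemma TT_succ (m : ℕ) : TT (m+1) = (1 - X^(2*m+1))^2 * TT m := by
  classical
  set J : Finset ℤ := Icc (-(m:ℤ)) (m:ℤ) with hJ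
  set I : Finset ℤ := Icc (-(m:ℤ)-1) ((m:ℤ)+1) with hI
  have hJI : J ⊆ I := by
    intro x hx
    simp only [hJ, hI, mem_Icc] at hx ⊢
    omega
  set t1 : ℤ → PowerSeries ℤ :=
    fun k => C ((Int.negOnePow k : ℤˣ) : ℤ) * (X ^ ((k^2).toNat) * qb (2*m) ((m:ℤ)+k)) with ht1
  set t2 : ℤ → PowerSeries ℤ :=
    fun k => C ((Int.negOnePow k : ℤˣ) : ℤ) * (X ^ ((k^2).toNat) *
      (X ^ (2*((m:ℤ)+1-k)).toNat * qb (2*m) ((m:ℤ)+k-1))) with ht2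
  set t3 : ℤ → PowerSeries ℤ :=
    fun k => C ((Int.negOnePow k : ℤˣ) : ℤ) * (X ^ ((k^2).toNat) *
      (X ^ (2*((m:ℤ)+1+k)).toNat * qb (2*m) ((m:ℤ)+1+k))) with ht3
  set t4 : ℤ → PowerSeries ℤ :=
    fun k => C ((Int.negOnePow k : ℤˣ) : ℤ) * (X ^ ((k^2).toNat) *
      (X ^ (2*((m:ℤ)+1+k)).toNat * (X ^ (2*((m:ℤ)-k)).toNat * qb (2*m) ((m:ℤ)+k)))) with ht4
  have expand : ∀ k : ℤ, qb (2*(m+1)) ((m:ℤ)+1+k)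
      = qb (2*m) ((m:ℤ)+k)
        + X ^ (2*((m:ℤ)+1-k)).toNat * qb (2*m) ((m:ℤ)+k-1)
        + (X ^ (2*((m:ℤ)+1+k)).toNat * qb (2*m) ((m:ℤ)+1+k)
          + X ^ (2*((m:ℤ)+1+k)).toNat * (X ^ (2*((m:ℤ)-k)).toNat * qb (2*m) ((m:ℤ)+k))) := by
    intro k
    have hd : qb (2*(m+1)) ((m:ℤ)+1+k)
        = qb (2*m+1) ((m:ℤ)+1+k-1) + X ^ (2*((m:ℤ)+1+k)).toNat * qb (2*m+1) ((m:ℤ)+1+k) := by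
      show qb (2*m+1+1) ((m:ℤ)+1+k) = _
      rfl
    have harg : (m:ℤ)+1+k-1 = (m:ℤ)+k := by ring
    rw [hd, harg]
    have p2a := qb_pascal2 (2*m) ((m:ℤ)+k)
    have p2b := qb_pascal2 (2*m) ((m:ℤ)+1+k)
    have ea : (2*(((2*m : ℕ):ℤ)+1-((m:ℤ)+k))).toNat = (2*((m:ℤ)+1-k)).toNat := by
      push_cast; omega
    have eb : (2*(((2*m : ℕ):ℤ)+1-((m:ℤ)+1+k))).toNat = (2*((m:ℤ)-k)).toNat := by
      push_cast; omega
    rw [ea] at p2a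
    rw [eb, harg] at p2b
    rw [p2a, p2b]
    ring
  have hcast : ((m+1 : ℕ) : ℤ) = (m:ℤ)+1 := by push_cast; ring
  have split : TT (m+1)
      = ((∑ k ∈ I, t1 k) + (∑ k ∈ I, t2 k)) + ((∑ k ∈ I, t3 k) + (∑ k ∈ I, t4 k)) := by
    rw [TT]
    rw [← sum_add_distrib, ← sum_add_distrib, ← sum_add_distrib]
    refine sum_congr (by rw [hcast]; congr 1 <;> ring_nf) ?_
    intro k hk
    rw [hcast, expand k]
    simp only [ht1, ht2, ht3, ht4]
    ring
  have hS1 : ∑ k ∈ I, t1 k = TT m := by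
    rw [TT, ← hJ]
    symm
    apply sum_subset hJI
    intro x hxI hxJ
    have hx : x = (m:ℤ)+1 ∨ x = -(m:ℤ)-1 := by
      simp only [hI, mem_Icc] at hxI
      simp only [hJ, mem_Icc] at hxJ
      omega
    rcases hx with rfl | rfl
    · have hq : qb (2*m) ((m:ℤ)+((m:ℤ)+1)) = 0 := qb_gt _ _ (by push_cast; omega)
      simp only [ht1, hq, mul_zero]
    · have hq : qb (2*m) ((m:ℤ)+(-(m:ℤ)-1)) = 0 := qb_neg _ _ (by omega)
      simp only [ht1, hq, mul_zero]
  have hS4 : ∑ k ∈ I, t4 k = X^(4*m+2) * TT m := by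
    have shrink : ∑ k ∈ I, t4 k = ∑ k ∈ J, t4 k := by
      symm
      apply sum_subset hJI
      intro x hxI hxJ
      have hx : x = (m:ℤ)+1 ∨ x = -(m:ℤ)-1 := by
        simp only [hI, mem_Icc] at hxI
        simp only [hJ, mem_Icc] at hxJ
        omega
      rcases hx with rfl | rfl
      · have hq : qb (2*m) ((m:ℤ)+((m:ℤ)+1)) = 0 := qb_gt _ _ (by push_cast; omega)
        simp only [ht4, hq, mul_zero]
      · have hq : qb (2*m) ((m:ℤ)+(-(m:ℤ)-1)) = 0 := qb_neg _ _ (by omega)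
        simp only [ht4, hq, mul_zero]
    rw [shrink, TT, ← hJ, mul_sum]
    refine sum_congr rfl ?_
    intro k hk
    simp only [hJ, mem_Icc] at hk
    have hcomb : (X : PowerSeries ℤ) ^ (2*((m:ℤ)+1+k)).toNat * X ^ (2*((m:ℤ)-k)).toNat
        = X ^ (4*m+2) := by
      rw [← pow_add]; congr 1; omega
    simp only [ht4]
    rw [← mul_assoc (X ^ (2*((m:ℤ)+1+k)).toNat), hcomb]
    ring
  have hS2 : ∑ k ∈ I, t2 k = -(X^(2*m+1) * TT m) := by
    have shrink : ∑ k ∈ I, t2 k = ∑ k ∈ Icc (-(m:ℤ)+1) ((m:ℤ)+1), t2 k := by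
      symm
      apply sum_subset
      · intro x hx
        simp only [hI, mem_Icc] at hx ⊢
        omega
      intro x hxI hxJ
      have hx : x = -(m:ℤ) ∨ x = -(m:ℤ)-1 := by
        simp only [hI, mem_Icc] at hxI
        simp only [mem_Icc] at hxJ
        omega
      rcases hx with rfl | rfl
      · have hq : qb (2*m) ((m:ℤ)+(-(m:ℤ))-1) = 0 := qb_neg _ _ (by omega)
        simp only [ht2, hq, mul_zero]
      · have hq : qb (2*m) ((m:ℤ)+(-(m:ℤ)-1)-1) = 0 := qb_neg _ _ (by omega)
        simp only [ht2, hq, mul_zero]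
    have hmap : Icc (-(m:ℤ)+1) ((m:ℤ)+1) = (Icc (-(m:ℤ)) (m:ℤ)).map (addRightEmbedding 1) := by
      rw [Finset.map_add_right_Icc]
    rw [shrink, hmap, sum_map, TT, ← hJ, mul_sum, ← sum_neg_distrib]
    refine sum_congr rfl ?_
    intro k hk
    simp only [hJ, mem_Icc] at hk
    simp only [ht2, addRightEmbedding, Function.Embedding.coeFn_mk]
    have hsgn := negOnePow_succ' k
    have harg : (m:ℤ)+(k+1)-1 = (m:ℤ)+k := by ring
    have hcomb : (X : PowerSeries ℤ) ^ (((k+1)^2).toNat) * X ^ (2*((m:ℤ)+1-(k+1))).toNat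
        = X ^ (2*m+1) * X ^ ((k^2).toNat) := by
      rw [← pow_add, ← pow_add]
      congr 1
      have h1 : (k+1)^2 = k^2 + 2*k + 1 := by ring
      have h3 : (0:ℤ) ≤ k^2 + 2*k + 1 := by rw [← h1]; exact sq_nonneg _
      obtain ⟨K, hK⟩ : ∃ K : ℤ, K = k^2 := ⟨k^2, rfl⟩
      rw [← hK] at h3
      have h2 : 0 ≤ K := hK ▸ sq_nonneg k
      rw [h1, ← hK]
      omega
    rw [harg, hsgn, map_neg]
    linear_combination (-(C ((Int.negOnePow k : ℤˣ) : ℤ)) * qb (2*m) ((m:ℤ)+k)) * hcomb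
  have hS3 : ∑ k ∈ I, t3 k = -(X^(2*m+1) * TT m) := by
    have shrink : ∑ k ∈ I, t3 k = ∑ k ∈ Icc (-(m:ℤ)-1) ((m:ℤ)-1), t3 k := by
      symm
      apply sum_subset
      · intro x hx
        simp only [hI, mem_Icc] at hx ⊢
        omega
      intro x hxI hxJ
      have hx : x = (m:ℤ) ∨ x = (m:ℤ)+1 := by
        simp only [hI, mem_Icc] at hxI
        simp only [mem_Icc] at hxJ
        omega
      rcases hx with rfl | rfl
      · have hq : qb (2*m) ((m:ℤ)+1+(m:ℤ)) = 0 := qb_gt _ _ (by push_cast; omega)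
        simp only [ht3, hq, mul_zero]
      · have hq : qb (2*m) ((m:ℤ)+1+((m:ℤ)+1)) = 0 := qb_gt _ _ (by push_cast; omega)
        simp only [ht3, hq, mul_zero]
    have hmap : Icc (-(m:ℤ)-1) ((m:ℤ)-1)
        = (Icc (-(m:ℤ)) (m:ℤ)).map (addRightEmbedding (-1)) := by
      rw [Finset.map_add_right_Icc]
      congr 1 <;> ring
    rw [shrink, hmap, sum_map, TT, ← hJ, mul_sum, ← sum_neg_distrib]
    refine sum_congr rfl ?_
    intro k hk
    simp only [hJ, mem_Icc] at hk
    simp only [ht3, addRightEmbedding, Function.Embedding.coeFn_mk]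
    have hsgn : (((k+(-1)).negOnePow : ℤˣ) : ℤ) = -((k.negOnePow : ℤˣ) : ℤ) := by
      have h : k + (-1) = k - 1 := by ring
      rw [h]
      exact negOnePow_pred' k
    have harg : (m:ℤ)+1+(k+(-1)) = (m:ℤ)+k := by ring
    rw [harg]
    have hcomb : (X : PowerSeries ℤ) ^ (((k+(-1))^2).toNat) * X ^ (2*((m:ℤ)+k)).toNat
        = X ^ (2*m+1) * X ^ ((k^2).toNat) := by
      rw [← pow_add, ← pow_add]
      congr 1
      have h1 : (k+(-1))^2 = k^2 - 2*k + 1 := by ring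
      have h3 : (0:ℤ) ≤ k^2 - 2*k + 1 := by rw [← h1]; exact sq_nonneg _
      obtain ⟨K, hK⟩ : ∃ K : ℤ, K = k^2 := ⟨k^2, rfl⟩
      rw [← hK] at h3
      have h2 : 0 ≤ K := hK ▸ sq_nonneg k
      rw [h1, ← hK]
      omega
    rw [hsgn, map_neg]
    linear_combination (-(C ((Int.negOnePow k : ℤˣ) : ℤ)) * qb (2*m) ((m:ℤ)+k)) * hcomb
  rw [split, hS1, hS2, hS3, hS4]
  have hx2 : (X : PowerSeries ℤ)^(4*m+2) = X^(2*m+1) * X^(2*m+1) := by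
    rw [← pow_add]; congr 1; omega
  rw [hx2]
  ring

theorem jtp (m : ℕ) : TT m = Hodd m ^ 2 := by
  induction m with
  | zero => simp [TT, Hodd, qb_zero]
  | succ m ih =>
    rw [TT_succ, ih]
    have h : Hodd (m+1) = Hodd m * (1 - X^(2*m+1)) := prod_range_succ _ _
    rw [h]
    ring

/-! ### Power series inverses of the products -/

/-- Indicator series of the multiples of `a`: the inverse of `1 - X^a`. -/
def invF (a : ℕ) : PowerSeries ℤ := PowerSeries.mk fun n => if a ∣ n then 1 else 0

lemma invF_mul (a : ℕ) (ha : 0 < a) : (1 - X^a) * invF a = 1 := by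
  have key : invF a * (1 - X^a) = 1 := by
    ext n
    rw [mul_sub, mul_one, map_sub, coeff_mul_X_pow']
    simp only [invF, coeff_mk]
    rcases Nat.eq_zero_or_pos n with rfl | hn
    · rw [if_pos (dvd_zero a), if_neg (by omega), coeff_one, if_pos rfl]
      ring
    · rw [coeff_one, if_neg hn.ne']
      by_cases hle : a ≤ n
      · rw [if_pos hle]
        have hiff : (a ∣ n) ↔ (a ∣ n - a) := by
          constructor
          · intro h
            exact Nat.dvd_sub h dvd_rfl
          · intro h
            have := Nat.dvd_add h (dvd_refl a)
            rwa [Nat.sub_add_cancel hle] at this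
        by_cases hd : a ∣ n
        · rw [if_pos hd, if_pos (hiff.mp hd)]
          ring
        · rw [if_neg hd, if_neg (fun hh => hd (hiff.mpr hh))]
          ring
      · rw [if_neg hle, if_neg (fun hd => hle (Nat.le_of_dvd hn hd))]
        ring
  rw [mul_comm]
  exact key

def P1 (s : ℕ) : PowerSeries ℤ := ∏ i ∈ range s, invF (i+1)
def F1 (s : ℕ) : PowerSeries ℤ := ∏ i ∈ range s, (1 - X^(i+1))
def P2 (s : ℕ) : PowerSeries ℤ := ∏ i ∈ range s, invF (2*(i+1))

lemma F1_mul_P1 (s : ℕ) : F1 s * P1 s = 1 := by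
  rw [F1, P1, ← prod_mul_distrib]
  exact prod_eq_one fun i _ => invF_mul (i+1) (Nat.succ_pos i)

lemma f2_mul_P2 (s : ℕ) : f2 s * P2 s = 1 := by
  rw [f2, P2, ← prod_mul_distrib]
  exact prod_eq_one fun i _ => invF_mul (2*(i+1)) (by omega)

lemma Hodd_mul_f2 (m : ℕ) : Hodd m * f2 m = F1 (2*m) := by
  induction m with
  | zero => simp [Hodd, f2, F1]
  | succ m ih =>
    have h1 : Hodd (m+1) = Hodd m * (1 - X^(2*m+1)) := prod_range_succ _ _
    have h2 : f2 (m+1) = f2 m * (1 - X^(2*(m+1))) := prod_range_succ _ _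
    have h3 : F1 (2*(m+1)) = F1 (2*m) * (1 - X^(2*m+1)) * (1 - X^(2*m+1+1)) := by
      have h : 2*(m+1) = (2*m+1)+1 := by omega
      rw [h, F1, prod_range_succ, prod_range_succ, ← F1]
    rw [h1, h2, h3, ← ih]
    have h : 2*(m+1) = 2*m+1+1 := by omega
    rw [h]
    ring

lemma Hodd_mul_P1 (m : ℕ) : Hodd m * P1 (2*m) = P2 m := by
  have h : Hodd m * P1 (2*m) = Hodd m * P1 (2*m) * (f2 m * P2 m) := by
    rw [f2_mul_P2, mul_one]
  rw [h]
  have h2 : Hodd m * P1 (2*m) * (f2 m * P2 m) = (Hodd m * f2 m) * P1 (2*m) * P2 m := by ring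
  rw [h2, Hodd_mul_f2, F1_mul_P1, one_mul]

/-! ### Equality of coefficients up to a bound -/

def EqT (n : ℕ) (A B : PowerSeries ℤ) : Prop := ∀ j : ℕ, j ≤ n → coeff j A = coeff j B

lemma eqT_refl {n : ℕ} {A : PowerSeries ℤ} : EqT n A A := fun _ _ => Eq.refl _

lemma EqT.trans {n : ℕ} {A B C : PowerSeries ℤ} (h1 : EqT n A B) (h2 : EqT n B C) :
    EqT n A C := fun j hj => (h1 j hj).trans (h2 j hj)

lemma EqT.symm {n : ℕ} {A B : PowerSeries ℤ} (h : EqT n A B) : EqT n B A :=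
  fun j hj => (h j hj).symm

lemma EqT.mul {n : ℕ} {A B C D : PowerSeries ℤ} (h1 : EqT n A B) (h2 : EqT n C D) :
    EqT n (A * C) (B * D) := by
  intro j hj
  rw [coeff_mul, coeff_mul]
  refine sum_congr (Eq.refl _) ?_
  intro p hp
  rw [HasAntidiagonal.mem_antidiagonal] at hp
  rw [h1 p.1 (by omega), h2 p.2 (by omega)]

lemma EqT.prod_one {n : ℕ} {s : Finset ℕ} {f : ℕ → PowerSeries ℤ}
    (h : ∀ i ∈ s, EqT n (f i) 1) : EqT n (∏ i ∈ s, f i) 1 := by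
  classical
  induction s using Finset.induction_on with
  | empty =>
    rw [prod_empty]
    exact eqT_refl
  | @insert a s' hx ih =>
    rw [prod_insert hx]
    have := (h a (mem_insert_self a s')).mul (ih fun i hi => h i (mem_insert_of_mem hi))
    simpa using this

lemma invF_eqT_one {n a : ℕ} (h : n < a) : EqT n (invF a) 1 := by
  intro j hj
  rw [coeff_one]
  simp only [invF, coeff_mk]
  rcases Nat.eq_zero_or_pos j with rfl | hpos
  · simp
  · rw [if_neg hpos.ne', if_neg]
    intro hdvd
    have := Nat.le_of_dvd hpos hdvd
    omega

lemma P2_stable {n s s' : ℕ} (hss : s ≤ s') (hn : n ≤ 2*s+1) : EqT n (P2 s') (P2 s) := by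
  have hsplit : P2 s' = P2 s * ∏ i ∈ Ico s s', invF (2*(i+1)) := by
    rw [P2, P2, range_eq_Ico, range_eq_Ico]
    exact (prod_Ico_consecutive (fun i => invF (2*(i+1))) (Nat.zero_le s) hss).symm
  rw [hsplit]
  have h1 : EqT n (∏ i ∈ Ico s s', invF (2*(i+1))) 1 := by
    apply EqT.prod_one
    intro i hi
    rw [mem_Ico] at hi
    exact invF_eqT_one (by omega)
  have := (eqT_refl (A := P2 s)).mul h1
  simpa using this

lemma qb_eq_prod (m : ℕ) (k : ℤ) (h0 : -(m:ℤ) ≤ k) (h1 : k ≤ m) :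
    qb (2*m) ((m:ℤ)+k) = f2 (2*m) * P2 (((m:ℤ)+k).toNat) * P2 (((m:ℤ)-k).toNat) := by
  have key := qb_mul_f2 (2*m) ((m:ℤ)+k) (by omega) (by push_cast; omega)
  have hsub : (((2*m:ℕ):ℤ) - ((m:ℤ)+k)).toNat = ((m:ℤ)-k).toNat := by push_cast; omega
  rw [hsub] at key
  calc qb (2*m) ((m:ℤ)+k)
      = qb (2*m) ((m:ℤ)+k) * ((f2 (((m:ℤ)+k).toNat) * P2 (((m:ℤ)+k).toNat))
          * (f2 (((m:ℤ)-k).toNat) * P2 (((m:ℤ)-k).toNat))) := by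
        rw [f2_mul_P2, f2_mul_P2]; ring
    _ = (qb (2*m) ((m:ℤ)+k) * f2 (((m:ℤ)+k).toNat) * f2 (((m:ℤ)-k).toNat))
          * (P2 (((m:ℤ)+k).toNat) * P2 (((m:ℤ)-k).toNat)) := by ring
    _ = f2 (2*m) * P2 (((m:ℤ)+k).toNat) * P2 (((m:ℤ)-k).toNat) := by rw [key]; ring

lemma qb_eqT_P2 (m n' : ℕ) (k : ℤ) (h0 : -(m:ℤ) ≤ k) (h1 : k ≤ m)
    (ha : n' ≤ 2*(((m:ℤ)+k).toNat)+1) (hb : n' ≤ 2*(((m:ℤ)-k).toNat)+1)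
    (hm : n' ≤ 2*m+1) :
    EqT n' (qb (2*m) ((m:ℤ)+k)) (P2 m) := by
  rw [qb_eq_prod m k h0 h1]
  have sa : EqT n' (P2 (2*m)) (P2 (((m:ℤ)+k).toNat)) := P2_stable (by omega) ha
  have sb : EqT n' (P2 (2*m)) (P2 (((m:ℤ)-k).toNat)) := P2_stable (by omega) hb
  have step1 : EqT n' (f2 (2*m) * P2 (((m:ℤ)+k).toNat) * P2 (((m:ℤ)-k).toNat))
      (f2 (2*m) * P2 (2*m) * P2 (2*m)) := (eqT_refl.mul sa.symm).mul sb.symm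
  have heq : f2 (2*m) * P2 (2*m) * P2 (2*m) = P2 (2*m) := by
    rw [f2_mul_P2, one_mul]
  refine step1.trans ?_
  rw [heq]
  exact P2_stable (by omega) hm

def theta (m : ℕ) : PowerSeries ℤ :=
  ∑ k ∈ Icc (-(m:ℤ)) (m:ℤ), C ((Int.negOnePow k : ℤˣ) : ℤ) * X^((k^2).toNat)

lemma core (n : ℕ) : EqT n (theta (n+1) * P2 (n+1)) (Hodd (n+1) ^ 2) := by
  set m := n+1 with hm
  rw [← jtp m]
  intro j hj
  rw [theta, sum_mul, map_sum, TT, map_sum]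
  refine sum_congr (Eq.refl _) ?_
  intro k hk
  rw [mem_Icc] at hk
  rw [mul_assoc, coeff_C_mul, coeff_C_mul]
  congr 1
  rw [mul_comm ((X:PowerSeries ℤ)^((k^2).toNat)) (P2 m),
    mul_comm ((X:PowerSeries ℤ)^((k^2).toNat)) (qb (2*m) ((m:ℤ)+k)),
    coeff_mul_X_pow', coeff_mul_X_pow']
  by_cases he : (k^2).toNat ≤ j
  · rw [if_pos he, if_pos he]
    set t := k.natAbs with ht
    have htt : ((t*t : ℕ) : ℤ) = k^2 := by rw [Int.natAbs_mul_self]; ring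
    have he2 : (k^2).toNat = t*t := by omega
    have hsq : 2*t ≤ t*t+1 := by nlinarith
    exact ((qb_eqT_P2 m (j - (k^2).toNat) k hk.1 hk.2 (by omega) (by omega) (by omega))
      (j - (k^2).toNat) le_rfl).symm
  · rw [if_neg he, if_neg he]

lemma chain (n : ℕ) : EqT n (theta (n+1) * (P1 (2*(n+1)))^2) (P2 (n+1)) := by
  set m := n+1 with hm
  have hcore := core n
  have hmul := hcore.mul (eqT_refl (A := f2 m * (P1 (2*m))^2))
  have hL : theta m * P2 m * (f2 m * (P1 (2*m))^2) = theta m * (P1 (2*m))^2 := by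
    calc theta m * P2 m * (f2 m * (P1 (2*m))^2)
        = theta m * (P1 (2*m))^2 * (f2 m * P2 m) := by ring
      _ = theta m * (P1 (2*m))^2 := by rw [f2_mul_P2, mul_one]
  have hR : Hodd m ^2 * (f2 m * (P1 (2*m))^2) = P2 m := by
    calc Hodd m^2 * (f2 m * (P1 (2*m))^2) = (Hodd m * P1 (2*m))^2 * f2 m := by ring
      _ = P2 m ^2 * f2 m := by rw [Hodd_mul_P1]
      _ = P2 m * (f2 m * P2 m) := by ring
      _ = P2 m := by rw [f2_mul_P2, mul_one]
  rw [hL, hR] at hmul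
  exact hmul

/-! ### Counting machinery (adapted from Archive/Wiedijk100Theorems/Partition.lean) -/

section Counting
open scoped Classical
variable {α : Type*}

/-- A convenience constructor for the power series whose coefficients indicate a subset. -/
def indicatorSeries (α : Type*) [Semiring α] (s : Set ℕ) : PowerSeries α :=
  PowerSeries.mk fun n => if n ∈ s then 1 else 0

theorem coeff_indicator (s : Set ℕ) [Semiring α] (n : ℕ) :
    coeff n (indicatorSeries α s) = if n ∈ s then 1 else 0 :=
  coeff_mk _ _

theorem coeff_indicator_pos (s : Set ℕ) [Semiring α] (n : ℕ) (h : n ∈ s) :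
    coeff n (indicatorSeries α s) = 1 := by rw [coeff_indicator, if_pos h]

theorem coeff_indicator_neg (s : Set ℕ) [Semiring α] (n : ℕ) (h : n ∉ s) :
    coeff n (indicatorSeries α s) = 0 := by rw [coeff_indicator, if_neg h]

theorem constantCoeff_indicator (s : Set ℕ) [Semiring α] :
    constantCoeff (indicatorSeries α s) = if 0 ∈ s then 1 else 0 :=
  rfl

theorem two_series (i : ℕ) [Semiring α] :
    1 + (X : PowerSeries α) ^ i.succ = indicatorSeries α {0, i.succ} := by
  ext n
  simp only [coeff_indicator, coeff_one, coeff_X_pow, Set.mem_insert_iff, Set.mem_singleton_iff,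
    map_add]
  cases' n with d
  · simp [(Nat.succ_ne_zero i).symm]
  · simp [Nat.succ_ne_zero d]

theorem num_series' [Field α] (i : ℕ) :
    (1 - (X : PowerSeries α) ^ (i + 1))⁻¹ = indicatorSeries α {k | i + 1 ∣ k} := by
  rw [PowerSeries.inv_eq_iff_mul_eq_one]
  · ext n
    cases n with
    | zero => simp [mul_sub, zero_pow, constantCoeff_indicator]
    | succ n =>
      simp only [coeff_one, if_false, mul_sub, mul_one, coeff_indicator,
        LinearMap.map_sub, reduceCtorEq]
      simp_rw [coeff_mul, coeff_X_pow, coeff_indicator, @boole_mul _ _ _ _]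
      erw [@sum_ite _ _ _ _ _ (fun _ => Classical.propDecidable _), sum_ite]
      simp_rw [@filter_filter _ _ _ _ _, sum_const_zero, add_zero, sum_const, nsmul_eq_mul, mul_one,
        sub_eq_iff_eq_add, zero_add]
      symm
      split_ifs with h
      · suffices #{a ∈ antidiagonal (n + 1) | i + 1 ∣ a.fst ∧ a.snd = i + 1} = 1 by
          simp only [Set.mem_setOf_eq]; convert congr_arg ((↑) : ℕ → α) this; norm_cast
        rw [card_eq_one]
        cases' h with p hp
        refine ⟨((i + 1) * (p - 1), i + 1), ?_⟩
        ext ⟨a₁, a₂⟩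
        simp only [mem_filter, Prod.mk.injEq, HasAntidiagonal.mem_antidiagonal, mem_singleton]
        constructor
        · rintro ⟨a_left, ⟨a, rfl⟩, rfl⟩
          refine ⟨?_, rfl⟩
          rw [Nat.mul_sub_left_distrib, ← hp, ← a_left, mul_one, Nat.add_sub_cancel]
        · rintro ⟨rfl, rfl⟩
          match p with
          | 0 => rw [mul_zero] at hp; cases hp
          | p + 1 => rw [hp]; simp [mul_add]
      · suffices #{a ∈ antidiagonal (n + 1) | i + 1 ∣ a.fst ∧ a.snd = i + 1} = 0 by
          simp only [Set.mem_setOf_eq]; convert congr_arg ((↑) : ℕ → α) this; norm_cast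
        rw [card_eq_zero]
        apply eq_empty_of_forall_notMem
        simp only [Prod.forall, mem_filter, not_and, HasAntidiagonal.mem_antidiagonal]
        rintro _ h₁ h₂ ⟨a, rfl⟩ rfl
        apply h
        simp [← h₂]
  · simp [zero_pow]


-- The main workhorse of the partition theorem proof.
theorem partialGF_prop (α : Type*) [CommSemiring α] (n : ℕ) (s : Finset ℕ) (hs : ∀ i ∈ s, 0 < i)
    (c : ℕ → Set ℕ) (hc : ∀ i, i ∉ s → 0 ∈ c i) :
    #{p : n.Partition | (∀ j, p.parts.count j ∈ c j) ∧ ∀ j ∈ p.parts, j ∈ s} =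
      coeff n (∏ i ∈ s, indicatorSeries α ((· * i) '' c i)) := by
  simp_rw [coeff_prod, coeff_indicator, prod_boole, sum_boole]
  apply congr_arg
  simp only [mem_univ, forall_true_left, not_and, not_forall, exists_prop,
    Set.mem_image, not_exists]
  set φ : (a : Nat.Partition n) →
    a ∈ filter (fun p ↦ (∀ (j : ℕ), Multiset.count j p.parts ∈ c j) ∧ ∀ j ∈ p.parts, j ∈ s) univ →
    ℕ →₀ ℕ := fun p _ => {
      toFun := fun i => Multiset.count i p.parts • i
      support := Finset.filter (fun i => i ≠ 0) p.parts.toFinset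
      mem_support_toFun := fun a => by
        simp only [smul_eq_mul, ne_eq, mul_eq_zero, Multiset.count_eq_zero]
        rw [not_or, not_not]
        simp only [Multiset.mem_toFinset, not_not, mem_filter] }
  refine Finset.card_bij φ ?_ ?_ ?_
  · intro a ha
    simp only [φ, not_forall, not_exists, not_and, exists_prop, mem_filter]
    rw [mem_finsuppAntidiag]
    dsimp only [ne_eq, smul_eq_mul, id_eq, eq_mpr_eq_cast, le_eq_subset, Finsupp.coe_mk]
    simp only [mem_univ, forall_true_left, not_and, not_forall, exists_prop,
      mem_filter, true_and] at ha
    refine ⟨⟨?_, fun i ↦ ?_⟩, fun i _ ↦ ⟨a.parts.count i, ha.1 i, rfl⟩⟩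
    · conv_rhs => simp [← a.parts_sum]
      rw [sum_multiset_count_of_subset _ s]
      · simp only [smul_eq_mul]
      · intro i
        simp only [Multiset.mem_toFinset, not_not, mem_filter]
        apply ha.2
    · simp only [ne_eq, Multiset.mem_toFinset, not_not, mem_filter, and_imp]
      exact fun hi _ ↦ ha.2 i hi
  · intro p₁ hp₁ p₂ hp₂ h
    apply Nat.Partition.ext
    simp only [true_and, mem_univ, mem_filter] at hp₁ hp₂
    ext i
    simp only [φ, ne_eq, Multiset.mem_toFinset, not_not, smul_eq_mul, Finsupp.mk.injEq] at h
    by_cases hi : i = 0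
    · rw [hi]
      rw [Multiset.count_eq_zero_of_notMem]
      · rw [Multiset.count_eq_zero_of_notMem]
        intro a; exact Nat.lt_irrefl 0 (hs 0 (hp₂.2 0 a))
      intro a; exact Nat.lt_irrefl 0 (hs 0 (hp₁.2 0 a))
    · rw [← mul_left_inj' hi]
      rw [funext_iff] at h
      exact h.2 i
  · simp only [φ, mem_filter, mem_finsuppAntidiag, mem_univ, exists_prop, true_and, and_assoc]
    rintro f ⟨hf, hf₃, hf₄⟩
    have hf' : f ∈ finsuppAntidiag s n := mem_finsuppAntidiag.mpr ⟨hf, hf₃⟩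
    simp only [mem_finsuppAntidiag] at hf'
    refine ⟨⟨∑ i ∈ s, Multiset.replicate (f i / i) i, ?_, ?_⟩, ?_, ?_, ?_⟩
    · intro i hi
      simp only [exists_prop, Multiset.mem_sum, mem_map, Function.Embedding.coeFn_mk] at hi
      rcases hi with ⟨t, ht, z⟩
      apply hs
      rwa [Multiset.eq_of_mem_replicate z]
    · simp_rw [Multiset.sum_sum, Multiset.sum_replicate, Nat.nsmul_eq_mul]
      rw [← hf'.1]
      refine sum_congr rfl fun i hi => Nat.div_mul_cancel ?_
      rcases hf₄ i hi with ⟨w, _, hw₂⟩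
      rw [← hw₂]
      exact dvd_mul_left _ _
    · intro i
      simp_rw [Multiset.count_sum', Multiset.count_replicate, sum_ite_eq']
      split_ifs with h
      · rcases hf₄ i h with ⟨w, hw₁, hw₂⟩
        rwa [← hw₂, Nat.mul_div_cancel _ (hs i h)]
      · exact hc _ h
    · intro i hi
      rw [Multiset.mem_sum] at hi
      rcases hi with ⟨j, hj₁, hj₂⟩
      rwa [Multiset.eq_of_mem_replicate hj₂]
    · ext i
      simp_rw [Multiset.count_sum', Multiset.count_replicate, sum_ite_eq']
      simp only [ne_eq, Multiset.mem_toFinset, not_not, smul_eq_mul, ite_mul,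
        zero_mul, Finsupp.coe_mk]
      split_ifs with h
      · apply Nat.div_mul_cancel
        rcases hf₄ i h with ⟨w, _, hw₂⟩
        apply Dvd.intro_left _ hw₂
      · apply symm
        rw [← Finsupp.notMem_support_iff]
        exact notMem_mono hf'.2 h


end Counting

/-- The partition number `p(n)`: the number of partitions of `n`. (local copy) -/
noncomputable def partitionNumber' (n : ℕ) : ℕ := Nat.card (Nat.Partition n)

lemma coeff_P1 (s d : ℕ) (h : d ≤ s) : coeff d (P1 s) = (partitionNumber' d : ℤ) := by
  classical
  have hpos : ∀ i ∈ (range s).map ⟨Nat.succ, Nat.succ_injective⟩, 0 < i := by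
    simp only [mem_map, Function.Embedding.coeFn_mk]
    rintro i ⟨a, -, rfl⟩
    exact Nat.succ_pos a
  have hprop := partialGF_prop ℤ d ((range s).map ⟨Nat.succ, Nat.succ_injective⟩) hpos
    (fun _ => Set.univ) (fun _ _ => trivial)
  have hprod : (∏ i ∈ (range s).map ⟨Nat.succ, Nat.succ_injective⟩,
      indicatorSeries ℤ ((· * i) '' Set.univ)) = P1 s := by
    rw [prod_map, P1]
    refine prod_congr rfl fun i _ => ?_
    ext n
    rw [coeff_indicator]
    simp only [invF, coeff_mk, Function.Embedding.coeFn_mk]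
    by_cases hd : (i+1) ∣ n
    · rw [if_pos, if_pos hd]
      obtain ⟨c, rfl⟩ := hd
      exact ⟨c, trivial, by rw [Nat.succ_eq_add_one]; ring⟩
    · rw [if_neg, if_neg hd]
      rintro ⟨x, -, rfl⟩
      exact hd (by simpa [Nat.succ_eq_add_one] using dvd_mul_left (i+1) x)
  rw [hprod] at hprop
  rw [← hprop]
  norm_cast
  rw [Finset.filter_true_of_mem, card_univ, partitionNumber', Nat.card_eq_fintype_card]
  intro p _
  refine ⟨fun _ => trivial, fun j hj => ?_⟩
  have hj1 : 0 < j := p.parts_pos hj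
  have hjd : j ≤ d := by
    simpa [p.parts_sum] using Multiset.single_le_sum (fun _ _ => Nat.zero_le _) _ hj
  rw [mem_map]
  exact ⟨j-1, mem_range.mpr (by omega), by simp only [Function.Embedding.coeFn_mk]; omega⟩

lemma coeff_P2 (s d : ℕ) (h : d ≤ 2*s) : coeff d (P2 s)
    = if 2 ∣ d then (partitionNumber' (d/2) : ℤ) else 0 := by
  classical
  set e2 : ℕ ↪ ℕ := ⟨fun i => 2*(i+1), fun a b hab => by have hab2 : 2*(a+1) = 2*(b+1) := hab; omega⟩ with he2
  have hpos : ∀ i ∈ (range s).map e2, 0 < i := by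
    simp only [mem_map, he2, Function.Embedding.coeFn_mk]
    rintro i ⟨a, -, rfl⟩
    exact (by omega : 0 < 2*(a+1))
  have hprop := partialGF_prop ℤ d ((range s).map e2) hpos (fun _ => Set.univ)
    (fun _ _ => trivial)
  have hprod : (∏ i ∈ (range s).map e2, indicatorSeries ℤ ((· * i) '' Set.univ)) = P2 s := by
    rw [prod_map, P2]
    refine prod_congr rfl fun i _ => ?_
    ext n
    rw [coeff_indicator]
    simp only [invF, coeff_mk, he2, Function.Embedding.coeFn_mk]
    by_cases hd : (2*(i+1)) ∣ n
    · rw [if_pos, if_pos hd]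
      obtain ⟨c, rfl⟩ := hd
      exact ⟨c, trivial, by rw [mul_comm]; rfl⟩
    · rw [if_neg, if_neg hd]
      rintro ⟨x, -, rfl⟩
      exact hd (dvd_mul_left _ x)
  rw [hprod] at hprop
  rw [← hprop]
  have hmem : ∀ (p : d.Partition), (∀ j ∈ p.parts, j ∈ (range s).map e2) →
      ∀ j ∈ p.parts, 2 ∣ j ∧ 2 ≤ j ∧ j ≤ 2*s := by
    intro p hp j hj
    obtain ⟨a, ha, rfl⟩ := mem_map.mp (hp j hj)
    rw [mem_range] at ha
    have hb : e2 a = 2*(a+1) := rfl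
    rw [hb]
    omega
  by_cases hev : 2 ∣ d
  · rw [if_pos hev]
    norm_cast
    rw [partitionNumber', Nat.card_eq_fintype_card, ← card_univ]
    apply Finset.card_bij (i := fun (p : d.Partition)
        (hp : p ∈ filter (fun p => (∀ j, p.parts.count j ∈ Set.univ) ∧
          ∀ j ∈ p.parts, j ∈ (range s).map e2) univ) =>
      (⟨p.parts.map (· / 2), by
        intro x hx
        obtain ⟨j, hj, rfl⟩ := Multiset.mem_map.mp hx
        have := hmem p (mem_filter.mp hp).2.2 j hj
        omega, by
        have hp2 := (mem_filter.mp hp).2.2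
        have hcong : p.parts.map (fun j => 2*(j/2)) = p.parts.map id := by
          apply Multiset.map_congr rfl
          intro j hj
          have := hmem p hp2 j hj
          simp only [id_eq]
          omega
        have hsum : (p.parts.map (fun j => 2*(j/2))).sum = d := by
          rw [hcong, Multiset.map_id, p.parts_sum]
        have hml : (p.parts.map (fun j => 2*(j/2))).sum = 2 * (p.parts.map (· / 2)).sum :=
          Multiset.sum_map_mul_left
        omega⟩ : (d/2).Partition))
    · intro p hp
      exact mem_univ _
    · intro p1 hp1 p2 hp2 hEq
      have hparts : p1.parts.map (· / 2) = p2.parts.map (· / 2) := congrArg Nat.Partition.parts hEq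
      apply Nat.Partition.ext
      have recover : ∀ (p : d.Partition), (∀ j ∈ p.parts, j ∈ (range s).map e2) →
          (p.parts.map (· / 2)).map (2 * ·) = p.parts := by
        intro p hp
        rw [Multiset.map_map]
        have : p.parts.map ((2 * ·) ∘ (· / 2)) = p.parts.map id := by
          apply Multiset.map_congr rfl
          intro j hj
          have := hmem p hp j hj
          simp only [Function.comp_apply, id_eq]
          omega
        rw [this, Multiset.map_id]
      rw [← recover p1 (mem_filter.mp hp1).2.2, ← recover p2 (mem_filter.mp hp2).2.2, hparts]
    · intro q _
      refine ⟨⟨q.parts.map (2 * ·), ?_, ?_⟩, ?_, ?_⟩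
      · intro x hx
        obtain ⟨a, ha, rfl⟩ := Multiset.mem_map.mp hx
        have := q.parts_pos ha
        omega
      · have hml : (q.parts.map (fun j => 2 * (id j))).sum = 2 * (q.parts.map id).sum :=
          Multiset.sum_map_mul_left
        rw [show ((2 * ·) : ℕ → ℕ) = (fun j => 2 * (id j)) from rfl, hml,
          Multiset.map_id, q.parts_sum]
        omega
      · rw [mem_filter]
        refine ⟨mem_univ _, fun _ => trivial, ?_⟩
        intro j hj
        obtain ⟨a, ha, rfl⟩ := Multiset.mem_map.mp hj
        have ha1 : 0 < a := q.parts_pos ha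
        have ha2 : a ≤ d/2 := by
          have := Multiset.single_le_sum (fun _ _ => Nat.zero_le _) _ ha
          rw [q.parts_sum] at this
          exact this
        rw [mem_map]
        refine ⟨a-1, mem_range.mpr (by omega), ?_⟩
        simp only [he2, Function.Embedding.coeFn_mk]
        exact (by omega : 2*((a-1)+1) = 2*a)
      · apply Nat.Partition.ext
        simp only
        rw [Multiset.map_map]
        have : q.parts.map ((· / 2) ∘ (2 * ·)) = q.parts.map id := by
          apply Multiset.map_congr rfl
          intro a _
          simp only [Function.comp_apply, id_eq]
          omega
        rw [this, Multiset.map_id]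
  · rw [if_neg hev]
    have hempty : filter (fun p : d.Partition => (∀ j, p.parts.count j ∈ Set.univ) ∧
        ∀ j ∈ p.parts, j ∈ (range s).map e2) univ = ∅ := by
      rw [eq_empty_iff_forall_notMem]
      intro p hp
      apply hev
      rw [← p.parts_sum]
      apply Multiset.dvd_sum
      intro j hj
      exact (hmem p (mem_filter.mp hp).2.2 j hj).1
    rw [hempty]
    simp

noncomputable def bipartitionNumber' (n : ℕ) : ℕ :=
  Nat.card {x : (Σ a : ℕ, Nat.Partition a) × (Σ b : ℕ, Nat.Partition b) // x.1.1 + x.2.1 = n}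

lemma bip_eq (d : ℕ) : bipartitionNumber' d
    = ∑ p ∈ antidiagonal d, partitionNumber' p.1 * partitionNumber' p.2 := by
  classical
  set f : (Σ i : Fin (d+1), Nat.Partition i.1 × Nat.Partition (d - i.1)) →
      {x : (Σ a : ℕ, Nat.Partition a) × (Σ b : ℕ, Nat.Partition b) // x.1.1 + x.2.1 = d} :=
    fun y => ⟨(⟨y.1.1, y.2.1⟩, ⟨d - y.1.1, y.2.2⟩), by
      have := y.1.2
      simp only
      omega⟩ with hf
  have hbij : Function.Bijective f := by
    constructor
    · rintro ⟨⟨i, hi⟩, pa, pb⟩ ⟨⟨i', hi'⟩, pa', pb'⟩ h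
      have hv := congrArg Subtype.val h
      simp only [hf] at hv
      injection hv with h1 h2
      injection h1 with hii hpa
      subst hii
      have hpa' : pa = pa' := eq_of_heq hpa
      injection h2 with hbb hpb
      subst hpa'
      subst hpb
      rfl
    · rintro ⟨⟨⟨a, pa⟩, ⟨b, pb⟩⟩, hab⟩
      simp only at hab
      have hb : b = d - a := by omega
      subst hb
      refine ⟨⟨⟨a, by omega⟩, pa, pb⟩, ?_⟩
      apply Subtype.ext
      rfl
  have hcard := Nat.card_eq_of_bijective f hbij
  rw [bipartitionNumber', ← hcard, Nat.card_eq_fintype_card, Fintype.card_sigma]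
  have hsum : ∀ i : Fin (d+1), Fintype.card (Nat.Partition i.1 × Nat.Partition (d - i.1))
      = partitionNumber' i.1 * partitionNumber' (d - i.1) := by
    intro i
    rw [Fintype.card_prod, partitionNumber', partitionNumber',
      Nat.card_eq_fintype_card, Nat.card_eq_fintype_card]
  rw [Finset.sum_congr rfl fun i _ => hsum i]
  rw [Fin.sum_univ_eq_sum_range (fun i => partitionNumber' i * partitionNumber' (d - i)) (d+1)]
  rw [Nat.sum_antidiagonal_eq_sum_range_succ (fun a b => partitionNumber' a * partitionNumber' b)]

lemma coeff_P1_sq (s d : ℕ) (h : d ≤ s) :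
    coeff d ((P1 s)^2) = (bipartitionNumber' d : ℤ) := by
  rw [sq, coeff_mul, bip_eq]
  push_cast
  refine sum_congr rfl fun p hp => ?_
  rw [HasAntidiagonal.mem_antidiagonal] at hp
  rw [coeff_P1 s p.1 (by omega), coeff_P1 s p.2 (by omega)]


/-- `∑_{k ∈ ℤ even} p₂(n - k²) - ∑_{k ∈ ℤ odd} p₂(n - k²) = p(n/2)`, where `p₂(m) = 0` for
`m < 0` and `p(n/2)` is interpreted as `0` for odd `n`.  The sums are restricted to
`-n ≤ k ≤ n`, which loses nothing since `p₂(n - k²) = 0` once `k² > n`. -/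
theorem sum_even_sub_sum_odd_bipartitionNumber (n : ℕ) :
    (∑ k ∈ (Finset.Icc (-(n : ℤ)) (n : ℤ)).filter (fun k => Even k),
        bipartitionNumberZ ((n : ℤ) - k ^ 2)) -
      (∑ k ∈ (Finset.Icc (-(n : ℤ)) (n : ℤ)).filter (fun k => Odd k),
        bipartitionNumberZ ((n : ℤ) - k ^ 2)) =
      if 2 ∣ n then (partitionNumber (n / 2) : ℤ) else 0 := by
  classical
  set m := n + 1 with hmdef
  have hpn : partitionNumber = partitionNumber' := rfl
  have hbip : bipartitionNumber = bipartitionNumber' := rfl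
  -- Step A : combine the two sums into one signed sum
  have hA : (∑ k ∈ (Icc (-(n : ℤ)) (n : ℤ)).filter (fun k => Even k),
        bipartitionNumberZ ((n : ℤ) - k ^ 2)) -
      (∑ k ∈ (Icc (-(n : ℤ)) (n : ℤ)).filter (fun k => Odd k),
        bipartitionNumberZ ((n : ℤ) - k ^ 2))
      = ∑ k ∈ Icc (-(n:ℤ)) (n:ℤ),
          ((Int.negOnePow k : ℤˣ) : ℤ) * bipartitionNumberZ ((n : ℤ) - k ^ 2) := by
    rw [← sum_filter_add_sum_filter_not (Icc (-(n:ℤ)) (n:ℤ)) (fun k => Even k)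
      (fun k => ((Int.negOnePow k : ℤˣ) : ℤ) * bipartitionNumberZ ((n : ℤ) - k ^ 2))]
    have h1 : ∑ k ∈ (Icc (-(n:ℤ)) (n:ℤ)).filter (fun k => Even k),
        ((Int.negOnePow k : ℤˣ) : ℤ) * bipartitionNumberZ ((n : ℤ) - k ^ 2)
        = ∑ k ∈ (Icc (-(n:ℤ)) (n:ℤ)).filter (fun k => Even k),
            bipartitionNumberZ ((n : ℤ) - k ^ 2) := by
      refine sum_congr rfl fun k hk => ?_
      rw [Int.negOnePow_even k (mem_filter.mp hk).2]
      simp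
    have h2 : ∑ k ∈ (Icc (-(n:ℤ)) (n:ℤ)).filter (fun k => ¬ Even k),
        ((Int.negOnePow k : ℤˣ) : ℤ) * bipartitionNumberZ ((n : ℤ) - k ^ 2)
        = -∑ k ∈ (Icc (-(n:ℤ)) (n:ℤ)).filter (fun k => Odd k),
            bipartitionNumberZ ((n : ℤ) - k ^ 2) := by
      rw [← sum_neg_distrib]
      refine sum_congr ?_ fun k hk => ?_
      · apply filter_congr
        intro k _
        simp [Int.not_even_iff_odd]
      · rw [Int.negOnePow_odd k (mem_filter.mp hk).2]
        simp
    rw [h1, h2]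
    ring
  -- Step B : enlarge the index set
  have hB : ∑ k ∈ Icc (-(n:ℤ)) (n:ℤ),
        ((Int.negOnePow k : ℤˣ) : ℤ) * bipartitionNumberZ ((n : ℤ) - k ^ 2)
      = ∑ k ∈ Icc (-(m:ℤ)) (m:ℤ),
          ((Int.negOnePow k : ℤˣ) : ℤ) * bipartitionNumberZ ((n : ℤ) - k ^ 2) := by
    apply sum_subset
    · intro x hx
      rw [mem_Icc] at hx ⊢
      omega
    · intro x hx1 hx2
      rw [mem_Icc] at hx1 hx2
      have ht : (n:ℤ) < x^2 := by
        set t := x.natAbs with htdef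
        have htt : ((t*t : ℕ) : ℤ) = x^2 := by rw [Int.natAbs_mul_self]; ring
        have htn : n < t := by omega
        have : t ≤ t*t := Nat.le_mul_of_pos_left t (by omega)
        omega
      rw [bipartitionNumberZ, if_neg (by omega), mul_zero]
  -- Step C : identify each summand with a coefficient
  have hC : ∀ k ∈ Icc (-(m:ℤ)) (m:ℤ), bipartitionNumberZ ((n : ℤ) - k ^ 2)
      = coeff n (X^((k^2).toNat) * (P1 (2*m))^2) := by
    intro k _
    rw [mul_comm, coeff_mul_X_pow']
    by_cases hke : (k^2).toNat ≤ n
    · have hk2 : (0:ℤ) ≤ k^2 := sq_nonneg k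
      rw [if_pos hke, bipartitionNumberZ, if_pos (by omega)]
      rw [coeff_P1_sq (2*m) (n - (k^2).toNat) (by omega)]
      rw [hbip]
      congr 2
      omega
    · have hk2 : (0:ℤ) ≤ k^2 := sq_nonneg k
      rw [if_neg hke, bipartitionNumberZ, if_neg (by omega)]
  -- Step D : recognize theta
  have hD : ∑ k ∈ Icc (-(m:ℤ)) (m:ℤ),
        ((Int.negOnePow k : ℤˣ) : ℤ) * coeff n (X^((k^2).toNat) * (P1 (2*m))^2)
      = coeff n (theta m * (P1 (2*m))^2) := by
    rw [theta, sum_mul, map_sum]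
    refine sum_congr rfl fun k hk => ?_
    rw [mul_assoc, coeff_C_mul]
  rw [hA, hB, sum_congr rfl (fun k hk => by rw [hC k hk]), hD]
  rw [chain n n le_rfl]
  rw [coeff_P2 m n (by omega), hpn]
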